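/- Let S be a numerical semigroup with Apéry set A (with respect to the multiplicity m), and define A_i = A ∩ [im−ρ,(i+1)m−ρ) where q = ⌈c/m⌉ and ρ = qm−c. If for some k ≥ 2 one has A_k ≠ ∅ and A_i = ∅ for all 1 ≤ i ≤ k−1, then every element of A_k is primitive. -/
import Mathlib


theorem stmt9 (S : Set ℕ)
    (h0 : 0 ∈ S)
    (hadd : ∀ a ∈ S, ∀ b ∈ S, a + b ∈ S)
    (hfin : (Sᶜ : Set ℕ).Finite)
    (m : ℕ) (hm : m ∈ S ∧ m ≠ 0 ∧ ∀ x ∈ S, x ≠ 0 → m ≤ x)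
    (c : ℕ) (hc : (∀ x, c ≤ x → x ∈ S) ∧ ∀ c', (∀ x, c' ≤ x → x ∈ S) → c ≤ c')
    (q ρ : ℕ) (hq : q = (c + m - 1) / m) (hρ : ρ = q * m - c)
    (A : Set ℕ) (hA : A = {x ∈ S | ¬ ∃ s ∈ S, x = m + s})
    (Ai : ℕ → Set ℕ)
    (hAi : ∀ i, Ai i = {x ∈ A | i * m ≤ x + ρ ∧ x + ρ < (i + 1) * m}) :
    ∀ k : ℕ, 2 ≤ k → (Ai k).Nonempty →
      (∀ i, 1 ≤ i → i ≤ k - 1 → Ai i = ∅) →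
      ∀ z ∈ Ai k, ¬ ∃ x ∈ S, ∃ y ∈ S, x ≠ 0 ∧ y ≠ 0 ∧ x + y = z := by
  obtain ⟨hmS, hm0, hmin⟩ := hm
  have hmpos : 0 < m := Nat.pos_of_ne_zero hm0
  -- ρ < m
  have hρm : ρ < m := by
    have key : m * q + (c + m - 1) % m = c + m - 1 := by
      rw [hq]; exact Nat.div_add_mod _ _
    have hr : (c + m - 1) % m < m := Nat.mod_lt _ hmpos
    have hQ : m * q = q * m := Nat.mul_comm _ _
    rw [hQ] at key
    obtain ⟨Q, hQe⟩ : ∃ Q, Q = q * m := ⟨_, rfl⟩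
    rw [← hQe] at key hρ
    omega
  intro k hk _ hemp z hz
  rw [hAi] at hz
  rw [hA] at hz
  obtain ⟨⟨hzS, hzA⟩, hzl, hzu⟩ := hz
  rintro ⟨x, hxS, y, hyS, hx0, hy0, hxy⟩
  have key2 : ∀ w, w ∈ S → w ≠ 0 → (¬ ∃ s ∈ S, w = m + s) → k * m ≤ w + ρ := by
    intro w hwS hw0 hwA
    obtain ⟨i, hi1, hi2⟩ : ∃ i, i * m ≤ w + ρ ∧ w + ρ < (i + 1) * m := by
      refine ⟨(w + ρ) / m, Nat.div_mul_le_self _ _, ?_⟩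
      have h1 := Nat.div_add_mod (w + ρ) m
      have h2 := Nat.mod_lt (w + ρ) hmpos
      obtain ⟨D, hD⟩ : ∃ D, D = (w + ρ) / m := ⟨_, rfl⟩
      rw [← hD] at h1 ⊢
      have : (D + 1) * m = m * D + m := by ring
      omega
    have hwm : m ≤ w := hmin w hwS hw0
    have hi0 : 1 ≤ i := by
      by_contra h
      have : i = 0 := by omega
      subst this
      simp at hi2
      omega
    have hik : k ≤ i := by
      by_contra h
      have hle : i ≤ k - 1 := by omega
      have := hemp i hi0 hle
      have hwAi : w ∈ Ai i := by
        rw [hAi, hA]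
        exact ⟨⟨hwS, hwA⟩, hi1, hi2⟩
      rw [this] at hwAi
      exact hwAi
    calc k * m ≤ i * m := Nat.mul_le_mul_right m hik
    _ ≤ w + ρ := hi1
  have hxA : ¬ ∃ s ∈ S, x = m + s := by
    rintro ⟨s, hsS, rfl⟩
    exact hzA ⟨s + y, hadd s hsS y hyS, by omega⟩
  have hyA : ¬ ∃ s ∈ S, y = m + s := by
    rintro ⟨s, hsS, rfl⟩
    exact hzA ⟨x + s, hadd x hxS s hsS, by omega⟩
  have hx := key2 x hxS hx0 hxA
  have hy := key2 y hyS hy0 hyA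
  have h2m : 2 * m ≤ k * m := Nat.mul_le_mul_right m hk
  have hex : (k + 1) * m = k * m + m := by ring
  obtain ⟨K, hK⟩ : ∃ K, K = k * m := ⟨_, rfl⟩
  rw [← hK] at hx hy h2m hex hzl
  rw [hex] at hzu
  omega
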